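/- Let k > 0, σ ≥ 0, τ₁ ≥ 0, τ₂ ∈ ℝ, and let Π be a real symmetric 2×2 matrix. Let M₀ := [[0, k], [k, −2]] and for ω ∈ ℝ let D(ω) := [[0, iω/(1 + σ·iω)], [−iω/(1 − σ·iω), 0]] (a Hermitian 2×2 complex matrix). If the Hermitian matrix Π − τ₁·M₀ − τ₂·D(ω) is positive semidefinite for every ω ∈ ℝ, then Π − τ₁·M₀ is positive semidefinite, and consequently S(τ₁·M₀) ⊆ S(Π). -/

import Mathlib

open Matrix
open scoped ComplexOrder

/-- The region `S(Π)` associated with a real symmetric 2×2 matrix `Π`: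
`S(Π) = {z ∈ ℂ : Π₀₀ + 2·Π₀₁·Re z + Π₁₁·|z|² ≥ 0}`. -/
def SRegionM (P : Matrix (Fin 2) (Fin 2) ℝ) : Set ℂ :=
  {z : ℂ | 0 ≤ P 0 0 + 2 * P 0 1 * z.re + P 1 1 * ‖z‖ ^ 2}

/-- The static Popov multiplier `M₀ = [[0, k], [k, −2]]`. -/
def popovM0 (k : ℝ) : Matrix (Fin 2) (Fin 2) ℝ := !![0, k; k, -2]

/-- The dynamic Popov multiplier term
`D(ω) = [[0, iω/(1 + σ·iω)], [−iω/(1 − σ·iω), 0]]`. -/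
noncomputable def popovD (σ ω : ℝ) : Matrix (Fin 2) (Fin 2) ℂ :=
  !![0, (Complex.I * ω) / (1 + σ * (Complex.I * ω));
     (-(Complex.I * ω)) / (1 - σ * (Complex.I * ω)), 0]

lemma map_ofReal_posSemidef_aux (Q : Matrix (Fin 2) (Fin 2) ℝ)
    (h : (Q.map Complex.ofReal).PosSemidef) : Q.PosSemidef := by
  refine posSemidef_iff_dotProduct_mulVec.mpr ⟨?_, ?_⟩
  · have h1 := h.1
    ext i j
    have := congrFun (congrFun h1 i) j
    simp only [conjTranspose_apply, map_apply, Complex.star_def, Complex.conj_ofReal] at this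
    simp only [conjTranspose_apply, star_trivial]
    exact_mod_cast this
  · intro x
    have h2 := h.dotProduct_mulVec_nonneg (fun i => (x i : ℂ))
    have : (star (fun i => (x i : ℂ)) ⬝ᵥ (Q.map Complex.ofReal) *ᵥ (fun i => (x i : ℂ)))
        = ((star x ⬝ᵥ Q *ᵥ x : ℝ) : ℂ) := by
      simp [dotProduct, mulVec, Fin.sum_univ_two, Complex.conj_ofReal]
    rw [this] at h2
    exact_mod_cast h2

/-- If `Π − τ₁·M₀ − τ₂·D(ω)` is positive semidefinite for every `ω ∈ ℝ`
(`k > 0`, `σ ≥ 0`, `τ₁ ≥ 0`, `τ₂ ∈ ℝ`), then `Π − τ₁·M₀` is positive semidefinite,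
and consequently `S(τ₁·M₀) ⊆ S(Π)`. -/
theorem popov_multiplier_reduction (k σ τ₁ τ₂ : ℝ) (hk : 0 < k) (hσ : 0 ≤ σ)
    (hτ₁ : 0 ≤ τ₁) (P : Matrix (Fin 2) (Fin 2) ℝ) (hP : P.IsSymm)
    (hpsd : ∀ ω : ℝ,
      (P.map Complex.ofReal - τ₁ • (popovM0 k).map Complex.ofReal -
        (τ₂ : ℂ) • popovD σ ω).PosSemidef) :
    (P - τ₁ • popovM0 k).PosSemidef ∧ SRegionM (τ₁ • popovM0 k) ⊆ SRegionM P := by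
  have h0 := hpsd 0
  have hD0 : popovD σ 0 = 0 := by
    simp [popovD]
    ext i j
    fin_cases i <;> fin_cases j <;> simp
  rw [hD0, smul_zero, sub_zero] at h0
  have hmap : (P - τ₁ • popovM0 k).map Complex.ofReal
      = P.map Complex.ofReal - τ₁ • (popovM0 k).map Complex.ofReal := by
    ext i j
    simp [Matrix.map_apply]
  have hQ : (P - τ₁ • popovM0 k).PosSemidef := by
    apply map_ofReal_posSemidef_aux
    rw [hmap]; exact h0
  refine ⟨hQ, ?_⟩
  intro z hz
  simp only [SRegionM, Set.mem_setOf_eq] at hz ⊢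
  set Q := P - τ₁ • popovM0 k with hQdef
  have hQc : (Q.map Complex.ofReal).PosSemidef := by rw [hmap]; exact h0
  have hsym : Q 1 0 = Q 0 1 := by
    have := congrFun (congrFun hP 0) 1
    simp [hQdef, popovM0, Matrix.transpose_apply] at this ⊢
    linarith
  have key := hQc.dotProduct_mulVec_nonneg ![1, z]
  have hexpand : (star ![1, z] ⬝ᵥ (Q.map Complex.ofReal) *ᵥ ![1, z])
      = ((Q 0 0 + 2 * Q 0 1 * z.re + Q 1 1 * ‖z‖ ^ 2 : ℝ) : ℂ) := by
    simp [dotProduct, mulVec, Fin.sum_univ_two, hsym]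
    have habs : (((‖z‖ : ℝ)) : ℂ)^2 = (starRingEnd ℂ) z * z := by
      rw [show (((‖z‖ : ℝ)) : ℂ)^2 = ((‖z‖ ^ 2 : ℝ) : ℂ) by push_cast; ring,
        Complex.sq_norm, Complex.normSq_eq_conj_mul_self]
    have hre : ((z.re : ℝ) : ℂ) = (z + (starRingEnd ℂ) z) / 2 := by
      rw [Complex.add_conj]; push_cast; ring
    rw [habs, hre]
    ring
  rw [hexpand] at key
  have keyR : (0:ℝ) ≤ Q 0 0 + 2 * Q 0 1 * z.re + Q 1 1 * ‖z‖ ^ 2 := by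
    exact_mod_cast key
  have e0 : Q 0 0 = P 0 0 := by simp [hQdef, popovM0]
  have e1 : Q 0 1 = P 0 1 - τ₁ * k := by simp [hQdef, popovM0]
  have e2 : Q 1 1 = P 1 1 + 2 * τ₁ := by simp [hQdef, popovM0]; ring
  have hzexp : (0:ℝ) ≤ 2 * (τ₁ * k) * z.re + (-(2*τ₁)) * ‖z‖ ^ 2 + 0 := by
    simpa [popovM0, Matrix.smul_apply, mul_comm, mul_assoc, mul_left_comm] using hz
  rw [e0, e1, e2] at keyR
  nlinarith [hz, keyR, Complex.sq_norm z]
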